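/- A commutative monoid Q is integral (cancellative) if and only if Q is u-integral (m + u = m with u a unit implies u = 0) and the quotient Q/Q* of Q by its group of units is integral. -/

import Mathlib

/-- The congruence on `M` identifying elements differing by a unit. -/
def unitCon (M : Type*) [AddCommMonoid M] : AddCon M :=
  { r := fun m n => ∃ u, IsAddUnit u ∧ m + u = n
    iseqv := by
      refine ⟨fun m => ⟨0, isAddUnit_zero, add_zero m⟩, ?_, ?_⟩
      · rintro m n ⟨u, hu, rfl⟩
        obtain ⟨v, hv⟩ := hu.exists_neg
        exact ⟨v, ⟨⟨v, u, by rw [add_comm]; exact hv, hv⟩, rfl⟩, by rw [add_assoc, hv, add_zero]⟩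
      · rintro m n p ⟨u, hu, rfl⟩ ⟨v, hv, rfl⟩
        exact ⟨u + v, hu.add hv, (add_assoc _ _ _).symm⟩
    add' := by
      rintro a b c d ⟨u, hu, rfl⟩ ⟨v, hv, rfl⟩
      exact ⟨u + v, hu.add hv, by abel⟩ }

/-- A commutative monoid `Q` is integral iff it is u-integral and its sharp quotient
`Q/Q*` is integral. -/
theorem stmt5 {Q : Type*} [AddCommMonoid Q] :
    (∀ m n p : Q, m + n = p + n → m = p) ↔
      ((∀ m u : Q, IsAddUnit u → m + u = m → u = 0) ∧
        ∀ a b c : (unitCon Q).Quotient, a + c = b + c → a = b) := by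
  constructor
  · intro h
    refine ⟨fun m u _ hmu => h u m 0 (by rwa [add_comm, zero_add]), ?_⟩
    intro a b c
    refine Quotient.inductionOn₃ a b c fun m n p hmp => ?_
    obtain ⟨u, hu, hsum⟩ : (unitCon Q) (m + p) (n + p) := Quotient.exact hmp
    refine Quotient.sound (⟨u, hu, ?_⟩ : (unitCon Q) m n)
    apply h _ p
    rw [add_right_comm] at hsum
    exact hsum
  · rintro ⟨hui, hq⟩ m n p hmn
    have : ((m : (unitCon Q).Quotient)) = p := by
      apply hq _ _ n
      exact congrArg (Quotient.mk _) hmn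
    obtain ⟨u, hu, rfl⟩ : (unitCon Q) m p := Quotient.exact this
    have : (m + n) + u = m + n := by
      rw [add_right_comm]
      exact hmn.symm
    rw [hui _ u hu this, add_zero]
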